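/- Let (X,d) be a sequentially Yoneda-complete T1 bounded quasi-metric space, and let I ∈ CBX with r̄I = 0 and representation (F_n). Then I⁺ equals the set of all b ∈ BX such that b is the least upper bound in (BX, ⊑) of some ⊑-ascending sequence (a_n)_{n>0} with a_n ∈ F_n for all n. -/
import Mathlib


open scoped NNReal

/-! Generic sequence notions for an arbitrary "distance" function `ρ`. -/

def IsCauchySeq {α : Type _} (ρ : α → α → ℝ) (u : ℕ → α) : Prop :=
  ∀ ε : ℝ, 0 < ε → ∃ N, ∀ n m, N ≤ n → n ≤ m → ρ (u n) (u m) < ε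

def IsBiCauchySeq {α : Type _} (ρ : α → α → ℝ) (u : ℕ → α) : Prop :=
  ∀ ε : ℝ, 0 < ε → ∃ N, ∀ n m, N ≤ n → N ≤ m → ρ (u n) (u m) < ε

/-- `sup_{m ≥ n} ρ (u m) y`. -/
noncomputable def supTail {α : Type _} (ρ : α → α → ℝ) (u : ℕ → α) (y : α) (n : ℕ) : ℝ :=
  sSup {t | ∃ m, n ≤ m ∧ t = ρ (u m) y}

/-- `x` is a Yoneda limit of `u`:  `ρ x y = inf_n sup_{m ≥ n} ρ (u m) y` for all `y`. -/
def IsYonedaLim {α : Type _} (ρ : α → α → ℝ) (u : ℕ → α) (x : α) : Prop :=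
  ∀ y, ρ x y = sInf (Set.range (supTail ρ u y))

def SeqYonedaCompleteD {α : Type _} (ρ : α → α → ℝ) : Prop :=
  ∀ u, IsCauchySeq ρ u → ∃ x, IsYonedaLim ρ u x

/-- Smyth completeness: every Cauchy sequence converges in the symmetrized metric. -/
def SmythCompleteD {α : Type _} (ρ : α → α → ℝ) : Prop :=
  ∀ u, IsCauchySeq ρ u → ∃ x, ∀ ε : ℝ, 0 < ε → ∃ N, ∀ n, N ≤ n →
    max (ρ x (u n)) (ρ (u n) x) < ε

/-- `inf_{m ≥ n} ρ e (u m)`. -/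
noncomputable def infTail {α : Type _} (ρ : α → α → ℝ) (u : ℕ → α) (e : α) (n : ℕ) : ℝ :=
  sInf {t | ∃ m, n ≤ m ∧ t = ρ e (u m)}

/-- `e` is a finite point: for every Cauchy sequence `u` with Yoneda limit `x`,
`ρ e x = sup_n inf_{m ≥ n} ρ e (u m)`. -/
def IsFinitePoint {α : Type _} (ρ : α → α → ℝ) (e : α) : Prop :=
  ∀ u x, IsCauchySeq ρ u → IsYonedaLim ρ u x →
    ρ e x = sSup (Set.range (infTail ρ u e))

/-- ω-algebraic: a countable set of finite points such that every point is a Yoneda limit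
of a Cauchy sequence of points from it. -/
def OmegaAlgebraicD {α : Type _} (ρ : α → α → ℝ) : Prop :=
  ∃ X0 : Set α, X0.Countable ∧ (∀ e ∈ X0, IsFinitePoint ρ e) ∧
    ∀ x, ∃ u : ℕ → α, (∀ n, u n ∈ X0) ∧ IsCauchySeq ρ u ∧ IsYonedaLim ρ u x

/-- A quasi-metric on `X`. -/
structure QuasiMetric (X : Type _) : Type _ where
  d : X → X → ℝ
  nonneg : ∀ x y, 0 ≤ d x y
  triangle : ∀ x y z, d x z ≤ d x y + d y z
  eq_iff : ∀ x y, x = y ↔ d x y = 0 ∧ d y x = 0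

/-- Formal balls over `X`. -/
abbrev FB (X : Type _) := X × ℝ≥0

/-- Nonempty finite subsets of the space of formal balls. -/
def PFin (X : Type _) : Type _ := {F : Set (FB X) // F.Finite ∧ F.Nonempty}

namespace QuasiMetric

variable {X : Type _} (Q : QuasiMetric X)

def IsT1 : Prop := ∀ x y, Q.d x y = 0 → x = y

def Bounded : Prop := ∃ C : ℝ, ∀ x y, Q.d x y ≤ C

def ball (x : X) (ε : ℝ) : Set X := {y | Q.d x y < ε}

/-- The topology `τ_d` induced by the quasi-metric. -/
def tau : TopologicalSpace X :=
  TopologicalSpace.generateFrom {s | ∃ x ε, 0 < ε ∧ s = Q.ball x ε}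

def dstar (x y : X) : ℝ := max (Q.d x y) (Q.d y x)

def SeqYonedaComplete : Prop := SeqYonedaCompleteD Q.d

def SmythComplete : Prop := SmythCompleteD Q.d

/-- `K` is `d⁻¹`-precompact. -/
def dInvPrecompact (K : Set X) : Prop :=
  ∀ ε : ℝ, 0 < ε → ∃ F : Set X, F.Finite ∧ F ⊆ K ∧ ∀ k ∈ K, ∃ x ∈ F, Q.d k x < ε

/-- The nonempty compact subsets of `(X, τ_d)`. -/
def K0 : Set (Set X) := {K | K.Nonempty ∧ @IsCompact X Q.tau K}

noncomputable def dPtSet (x : X) (B : Set X) : ℝ := sInf {t | ∃ b ∈ B, t = Q.d x b}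

noncomputable def dSetPt (A : Set X) (y : X) : ℝ := sInf {t | ∃ a ∈ A, t = Q.d a y}

/-- The Hausdorff quasi-metric. -/
noncomputable def Hd (A B : Set X) : ℝ :=
  max (sSup {t | ∃ b ∈ B, t = Q.dSetPt A b}) (sSup {t | ∃ a ∈ A, t = Q.dPtSet a B})

/-- Order on formal balls: `(x,r) ⊑ (y,s)  ↔  d x y ≤ r - s`. -/
def ble (a b : FB X) : Prop := Q.d a.1 b.1 ≤ (a.2 : ℝ) - (b.2 : ℝ)

/-- Auxiliary relation: `(x,r) ≺ (y,s)  ↔  d x y < r - s`. -/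
def blt (a b : FB X) : Prop := Q.d a.1 b.1 < (a.2 : ℝ) - (b.2 : ℝ)

def iota (x : X) : FB X := (x, 0)

/-- The quasi-metric `q` on formal balls. -/
noncomputable def q (a b : FB X) : ℝ :=
  max (Q.d a.1 b.1) |(a.2 : ℝ) - (b.2 : ℝ)| + ((b.2 : ℝ) - (a.2 : ℝ))

/-- The Egli–Milner relation `≺_EM` on nonempty finite sets of formal balls. -/
def em (F G : PFin X) : Prop :=
  (∀ b ∈ G.1, ∃ a ∈ F.1, Q.blt a b) ∧ (∀ a ∈ F.1, ∃ b ∈ G.1, Q.blt a b)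

/-- The non-strict Egli–Milner relation `⊑_EM`. -/
def emLE (F G : PFin X) : Prop :=
  (∀ a ∈ F.1, ∃ b ∈ G.1, Q.ble a b) ∧ (∀ b ∈ G.1, ∃ a ∈ F.1, Q.ble a b)

/-- `rF = max { r : (x,r) ∈ F }`. -/
noncomputable def rF (F : PFin X) : ℝ := sSup {t | ∃ p ∈ F.1, t = (p.2 : ℝ)}

/-- `δ(F,G) = min {(r-s) - d x y : (x,r) ∈ F, (y,s) ∈ G, (x,r) ≺ (y,s)}`. -/
noncomputable def delta (F G : PFin X) : ℝ :=
  sInf {t | ∃ a ∈ F.1, ∃ b ∈ G.1, Q.blt a b ∧ t = ((a.2 : ℝ) - (b.2 : ℝ)) - Q.d a.1 b.1}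

/-- The Hausdorff quasi-metric `H_q` on `P_fin(BX)` induced by `q`. -/
noncomputable def Hq (F G : PFin X) : ℝ :=
  max (sSup {t | ∃ a ∈ F.1, t = sInf {s | ∃ b ∈ G.1, s = Q.q a b}})
      (sSup {t | ∃ b ∈ G.1, t = sInf {s | ∃ a ∈ F.1, s = Q.q a b}})

/-- ω-chains in `(P_fin(BX), ≺_EM)`; `c n` plays the role of `F_{n+1}`. -/
def Chain : Type _ := {c : ℕ → PFin X // ∀ n, Q.em (c n) (c (n + 1))}

def chainLE (c c' : Q.Chain) : Prop := ∀ n, ∃ m, Q.em (c.1 n) (c'.1 m)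

def chainEquiv (c c' : Q.Chain) : Prop := Q.chainLE c c' ∧ Q.chainLE c' c

lemma blt_trans {a b c : FB X} (h1 : Q.blt a b) (h2 : Q.blt b c) : Q.blt a c := by
  have h3 := Q.triangle a.1 b.1 c.1
  unfold blt at h1 h2 ⊢
  linarith

lemma em_trans {F G H : PFin X} (h1 : Q.em F G) (h2 : Q.em G H) : Q.em F H := by
  constructor
  · intro b hb
    obtain ⟨a, ha, hab⟩ := h2.1 b hb
    obtain ⟨a', ha', h'⟩ := h1.1 a ha
    exact ⟨a', ha', Q.blt_trans h' hab⟩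
  · intro a ha
    obtain ⟨b, hb, hab⟩ := h1.2 a ha
    obtain ⟨c, hc, hbc⟩ := h2.2 b hb
    exact ⟨c, hc, Q.blt_trans hab hbc⟩

lemma chainLE_refl (c : Q.Chain) : Q.chainLE c c := fun n => ⟨n + 1, c.2 n⟩

lemma chainLE_trans {a b c : Q.Chain} (h1 : Q.chainLE a b) (h2 : Q.chainLE b c) :
    Q.chainLE a c := by
  intro n
  obtain ⟨m, hm⟩ := h1 n
  obtain ⟨k, hk⟩ := h2 m
  exact ⟨k, Q.em_trans hm hk⟩

def chainSetoid : Setoid Q.Chain where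
  r := Q.chainEquiv
  iseqv := ⟨fun c => ⟨Q.chainLE_refl c, Q.chainLE_refl c⟩,
    fun h => ⟨h.2, h.1⟩,
    fun h1 h2 => ⟨Q.chainLE_trans h1.1 h2.1, Q.chainLE_trans h2.2 h1.2⟩⟩

/-- The ω-Plotkin domain `CBX`: equivalence classes of ω-chains in `(P_fin(BX), ≺_EM)`. -/
def CBX : Type _ := Quotient Q.chainSetoid

/-- The partial order of `CBX`. -/
def cbLE : Q.CBX → Q.CBX → Prop :=
  Quotient.lift₂ Q.chainLE (by
    intro a b a' b' ha hb
    have ha' : Q.chainEquiv a a' := ha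
    have hb' : Q.chainEquiv b b' := hb
    exact propext ⟨fun h => Q.chainLE_trans (Q.chainLE_trans ha'.2 h) hb'.1,
      fun h => Q.chainLE_trans (Q.chainLE_trans ha'.1 h) hb'.2⟩)

def chainWB (c c' : Q.Chain) : Prop := ∃ m, ∀ n, Q.em (c.1 n) (c'.1 m)

/-- The way-below relation of `CBX`. -/
def cbWB : Q.CBX → Q.CBX → Prop :=
  Quotient.lift₂ Q.chainWB (by
    intro a b a' b' ha hb
    have ha' : Q.chainEquiv a a' := ha
    have hb' : Q.chainEquiv b b' := hb
    apply propext
    constructor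
    · rintro ⟨m, hm⟩
      obtain ⟨k, hk⟩ := hb'.1 m
      refine ⟨k, fun n => ?_⟩
      obtain ⟨p, hp⟩ := ha'.2 n
      exact Q.em_trans hp (Q.em_trans (hm p) hk)
    · rintro ⟨m, hm⟩
      obtain ⟨k, hk⟩ := hb'.2 m
      refine ⟨k, fun n => ?_⟩
      obtain ⟨p, hp⟩ := ha'.1 n
      exact Q.em_trans hp (Q.em_trans (hm p) hk))

/-- The Scott topology of `CBX`, generated by the sets `↟I`. -/
def scottTop : TopologicalSpace Q.CBX :=
  TopologicalSpace.generateFrom {s | ∃ I : Q.CBX, s = {J | Q.cbWB I J}}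

def upSet (F : PFin X) : Set (FB X) := {b | ∃ a ∈ F.1, Q.ble a b}

/-- `I⁺ = ⋂_n ↑F_n` for a representing chain. -/
def Iplus (c : Q.Chain) : Set (FB X) := ⋂ n, Q.upSet (c.1 n)

noncomputable def IplusQ (I : Q.CBX) : Set (FB X) := Q.Iplus (Quotient.out I)

/-- `r̄ I = inf { rF : F occurs in some chain representing I }`. -/
noncomputable def rbar (I : Q.CBX) : ℝ :=
  sInf {t | ∃ c : Q.Chain, Quotient.mk Q.chainSetoid c = I ∧ ∃ n, t = rF (c.1 n)}

/-- `c` is a standard representation of `K`: `c n` (playing the role of `F_{n+1}`) is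
`{(x_i^j, 1/(n+1)) : 1 ≤ j ≤ n+1, 1 ≤ i ≤ m_j}` where the `x_i^j ∈ K` satisfy
`∀ y ∈ K, ∃ i, d (x_i^j) y < 1/(2 j²)`. -/
def IsStdRep (K : Set X) (c : Q.Chain) : Prop :=
  ∃ (m : ℕ → ℕ) (x : ℕ → ℕ → X),
    (∀ j i, 1 ≤ j → 1 ≤ i → i ≤ m j → x j i ∈ K) ∧
    (∀ j, 1 ≤ j → ∀ y ∈ K, ∃ i, 1 ≤ i ∧ i ≤ m j ∧ Q.d (x j i) y < 1 / (2 * (j : ℝ) ^ 2)) ∧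
    (∀ n : ℕ, (c.1 n).1 =
      {p : FB X | ∃ j i, 1 ≤ j ∧ j ≤ n + 1 ∧ 1 ≤ i ∧ i ≤ m j ∧
        p = (x j i, ((n : ℝ≥0) + 1)⁻¹)})

/-- `D` on representing chains: `sup_n inf_m H_q(F_n, G_m)`. -/
noncomputable def Dchain (c c' : Q.Chain) : ℝ :=
  sSup {t | ∃ n, t = sInf {s | ∃ m, s = Q.Hq (c.1 n) (c'.1 m)}}

/-- The quasi-metric `D` on `CBX`. -/
noncomputable def D (I J : Q.CBX) : ℝ := Q.Dchain (Quotient.out I) (Quotient.out J)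

/-- The topology induced by `D` on `CBX`. -/
def DTop : TopologicalSpace Q.CBX :=
  TopologicalSpace.generateFrom
    {s | ∃ (I : Q.CBX) (ε : ℝ), 0 < ε ∧ s = {J | Q.D I J < ε}}

/-- The hyperspace `K_0(X)` as a type. -/
def K0T : Type _ := {K : Set X // K.Nonempty ∧ @IsCompact X Q.tau K}

/-- The Vietoris topology on `K_0(X)`. -/
def vietoris : TopologicalSpace Q.K0T :=
  TopologicalSpace.generateFrom
    ({s | ∃ V : Set X, @IsOpen X Q.tau V ∧ s = {K : Q.K0T | (K.1 ∩ V).Nonempty}} ∪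
     {s | ∃ V : Set X, @IsOpen X Q.tau V ∧ s = {K : Q.K0T | K.1 ⊆ V}})

/-- The topology of the Hausdorff quasi-metric on `K_0(X)`. -/
def hdTop : TopologicalSpace Q.K0T :=
  TopologicalSpace.generateFrom
    {s | ∃ (K : Q.K0T) (ε : ℝ), 0 < ε ∧ s = {L : Q.K0T | Q.Hd K.1 L.1 < ε}}

/-- Round ideals of `(P_fin(BX), ≺_EM)`. -/
def IsRoundIdeal (I : Set (PFin X)) : Prop :=
  I.Nonempty ∧ (∀ F G : PFin X, Q.em F G → G ∈ I → F ∈ I) ∧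
  (∀ F ∈ I, ∀ G ∈ I, ∃ H ∈ I, Q.em F H ∧ Q.em G H)

end QuasiMetric


/-! ### Auxiliary development for statement 5 -/

namespace QuasiMetric

variable {X : Type _} (Q : QuasiMetric X)

lemma ble_trans' {a b c : FB X} (h1 : Q.ble a b) (h2 : Q.ble b c) : Q.ble a c := by
  have h3 := Q.triangle a.1 b.1 c.1
  unfold ble at h1 h2 ⊢
  linarith

lemma blt_ble' {a b : FB X} (h : Q.blt a b) : Q.ble a b := le_of_lt h

lemma d_self (x : X) : Q.d x x = 0 := ((Q.eq_iff x x).1 rfl).1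

lemma ble_refl' (p : FB X) : Q.ble p p := by
  unfold ble; simp [Q.d_self]

/-- `Reach c b m n a`: there is a `≺`-chain of length `m` starting at `a ∈ F_n` (levelwise)
whose endpoint is `⊑ b`. -/
def Reach (c : Q.Chain) (b : FB X) (m n : ℕ) (a : FB X) : Prop :=
  Nat.rec (motive := fun _ => ℕ → FB X → Prop)
    (fun _ a => Q.ble a b)
    (fun _ ih n a => ∃ a' ∈ (c.1 (n + 1)).1, Q.blt a a' ∧ ih (n + 1) a')
    m n a

lemma reach_zero (c : Q.Chain) (b : FB X) (n : ℕ) (a : FB X) :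
    Q.Reach c b 0 n a ↔ Q.ble a b := Iff.rfl

lemma reach_succ (c : Q.Chain) (b : FB X) (m n : ℕ) (a : FB X) :
    Q.Reach c b (m + 1) n a ↔
      ∃ a' ∈ (c.1 (n + 1)).1, Q.blt a a' ∧ Q.Reach c b m (n + 1) a' := Iff.rfl

lemma reach_anti (c : Q.Chain) (b : FB X) :
    ∀ m n a, Q.Reach c b (m + 1) n a → Q.Reach c b m n a := by
  intro m
  induction m with
  | zero =>
    rintro n a ⟨a', _, hlt, hR⟩
    exact Q.ble_trans' (Q.blt_ble' hlt) hR
  | succ m ih =>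
    rintro n a ⟨a', hm, hlt, hR⟩
    exact ⟨a', hm, hlt, ih (n + 1) a' hR⟩

lemma reach_add (c : Q.Chain) (b : FB X) (k n : ℕ) (a : FB X) :
    ∀ j, Q.Reach c b (k + j) n a → Q.Reach c b k n a := by
  intro j
  induction j with
  | zero => exact fun h => h
  | succ j ih => exact fun h => ih (Q.reach_anti c b (k + j) n a h)

lemma reach_mono (c : Q.Chain) (b : FB X) (n : ℕ) (a : FB X) {k m : ℕ} (hkm : k ≤ m)
    (h : Q.Reach c b m n a) : Q.Reach c b k n a := by
  obtain ⟨j, rfl⟩ := Nat.exists_eq_add_of_le hkm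
  exact Q.reach_add c b k n a j h

lemma reach_exists (c : Q.Chain) (b : FB X) (hb : ∀ n, ∃ a ∈ (c.1 n).1, Q.ble a b) :
    ∀ m n, ∃ a ∈ (c.1 n).1, Q.Reach c b m n a := by
  intro m
  induction m with
  | zero => exact hb
  | succ m ih =>
    intro n
    obtain ⟨a, ha, hR⟩ := ih (n + 1)
    obtain ⟨p, hp, hlt⟩ := (c.2 n).1 a ha
    exact ⟨p, hp, a, ha, hlt, hR⟩

lemma finite_pigeonhole {α : Type _} {S : Set α} (hS : S.Finite) (P : ℕ → α → Prop)
    (hanti : ∀ a k m, k ≤ m → P m a → P k a) (hex : ∀ m, ∃ a ∈ S, P m a) :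
    ∃ a ∈ S, ∀ m, P m a := by
  classical
  by_contra h
  push_neg at h
  choose g hg using h
  set g' : α → ℕ := fun a => if h : a ∈ S then g a h else 0 with hg'
  obtain ⟨a, ha, hP⟩ := hex (hS.toFinset.sup g')
  have h1 : g' a ≤ hS.toFinset.sup g' := Finset.le_sup (hS.mem_toFinset.2 ha)
  have h2 : ¬ P (g' a) a := by
    have : g' a = g a ha := dif_pos ha
    rw [this]
    exact hg a ha
  exact h2 (hanti a (g' a) _ h1 hP)

lemma exists_good_seq (c : Q.Chain) (b : FB X) (hb : ∀ n, ∃ a ∈ (c.1 n).1, Q.ble a b) :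
    ∃ a : ℕ → FB X, (∀ n, a n ∈ (c.1 n).1) ∧ (∀ n, Q.blt (a n) (a (n + 1))) ∧
      ∀ n, Q.ble (a n) b := by
  classical
  have base : ∃ p ∈ (c.1 0).1, ∀ m, Q.Reach c b m 0 p :=
    finite_pigeonhole (c.1 0).2.1 (fun m p => Q.Reach c b m 0 p)
      (fun p k m hkm h => Q.reach_mono c b 0 p hkm h) (fun m => Q.reach_exists c b hb m 0)
  have step : ∀ (n : ℕ) (p : FB X), p ∈ (c.1 n).1 → (∀ m, Q.Reach c b m n p) →
      ∃ p', p' ∈ (c.1 (n + 1)).1 ∧ (∀ m, Q.Reach c b m (n + 1) p') ∧ Q.blt p p' := by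
    intro n p _ hR
    have hfin : {q | q ∈ (c.1 (n + 1)).1 ∧ Q.blt p q}.Finite :=
      (c.1 (n + 1)).2.1.subset fun x hx => hx.1
    have hex : ∀ m, ∃ q ∈ {q | q ∈ (c.1 (n + 1)).1 ∧ Q.blt p q}, Q.Reach c b m (n + 1) q := by
      intro m
      obtain ⟨q, hm, hlt, hr'⟩ := (Q.reach_succ c b m n p).1 (hR (m + 1))
      exact ⟨q, ⟨hm, hlt⟩, hr'⟩
    obtain ⟨q, hq, hall⟩ := finite_pigeonhole hfin (fun m q => Q.Reach c b m (n + 1) q)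
      (fun q k m hkm h => Q.reach_mono c b (n + 1) q hkm h) hex
    exact ⟨q, hq.1, hall, hq.2⟩
  obtain ⟨a0, ha0, hR0⟩ := base
  choose next h1 h2 h3 using step
  let f : ∀ n : ℕ, {p : FB X // p ∈ (c.1 n).1 ∧ ∀ m, Q.Reach c b m n p} := fun n =>
    Nat.rec ⟨a0, ha0, hR0⟩
      (fun n p => ⟨next n p.1 p.2.1 p.2.2, h1 n p.1 p.2.1 p.2.2, h2 n p.1 p.2.1 p.2.2⟩) n
  exact ⟨fun n => (f n).1, fun n => (f n).2.1, fun n => h3 n (f n).1 (f n).2.1 (f n).2.2,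
    fun n => (Q.reach_zero c b n (f n).1).1 ((f n).2.2 0)⟩

end QuasiMetric

/-- if `r̄I = 0` and `(F_n)` represents `I` then `I⁺` is the set of least upper
bounds of ⊑-ascending sequences `(a_n)` with `a_n ∈ F_n`. -/
theorem stmt5 {X : Type} (Q : QuasiMetric X) (hT1 : Q.IsT1) (hB : Q.Bounded)
    (hY : Q.SeqYonedaComplete) (I : Q.CBX) (hr : Q.rbar I = 0) (c : Q.Chain)
    (hrep : Quotient.mk Q.chainSetoid c = I) :
    Q.Iplus c = {b : FB X | ∃ a : ℕ → FB X, (∀ n, a n ∈ (c.1 n).1) ∧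
      (∀ n, Q.ble (a n) (a (n + 1))) ∧ (∀ n, Q.ble (a n) b) ∧
      ∀ b', (∀ n, Q.ble (a n) b') → Q.ble b b'} := by
  ext b
  simp only [Set.mem_setOf_eq]
  constructor
  · intro hbI
    have hb : ∀ n, ∃ p ∈ (c.1 n).1, Q.ble p b := by
      intro n
      have h := Set.mem_iInter.1 hbI n
      exact h
    obtain ⟨a, hamem, halt, hableb⟩ := Q.exists_good_seq c b hb
    have hble2 : ∀ n m, n ≤ m → Q.ble (a n) (a m) := by
      intro n m hnm
      induction m, hnm using Nat.le_induction with
      | base => exact Q.ble_refl' (a n)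
      | succ m hm ih => exact Q.ble_trans' ih (Q.blt_ble' (halt m))
    have hrad : ∀ n m, n ≤ m → ((a m).2 : ℝ) ≤ ((a n).2 : ℝ) := by
      intro n m hnm
      have h := hble2 n m hnm
      have h0 := Q.nonneg (a n).1 (a m).1
      unfold QuasiMetric.ble at h
      linarith
    have hrsmall : ∀ ε : ℝ, 0 < ε → ∃ n, ((a n).2 : ℝ) < ε := by
      intro ε hε
      have h0 : Q.rbar I < ε := by rw [hr]; exact hε
      unfold QuasiMetric.rbar at h0
      obtain ⟨t, ht1, ht2⟩ := exists_lt_of_csInf_lt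
        (s := {t | ∃ c' : Q.Chain, Quotient.mk Q.chainSetoid c' = I ∧
          ∃ n, t = QuasiMetric.rF (c'.1 n)}) ⟨_, c, hrep, 0, rfl⟩ h0
      obtain ⟨c', hc', n0, rfl⟩ := ht1
      have hequiv : Q.chainEquiv c' c := Quotient.exact (hc'.trans hrep.symm)
      obtain ⟨m0, hm0⟩ := hequiv.1 n0
      obtain ⟨p, hp, hplt⟩ := hm0.1 (a m0) (hamem m0)
      refine ⟨m0, ?_⟩
      have himg : {t | ∃ q ∈ (c'.1 n0).1, t = (q.2 : ℝ)} =
          (fun q : FB X => (q.2 : ℝ)) '' (c'.1 n0).1 := by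
        ext t
        constructor
        · rintro ⟨q, hq, rfl⟩; exact ⟨q, hq, rfl⟩
        · rintro ⟨q, hq, rfl⟩; exact ⟨q, hq, rfl⟩
      have h1 : (p.2 : ℝ) ≤ QuasiMetric.rF (c'.1 n0) := by
        unfold QuasiMetric.rF
        apply le_csSup
        · rw [himg]
          exact ((c'.1 n0).2.1.image _).bddAbove
        · exact ⟨p, hp, rfl⟩
      have h2 := Q.nonneg p.1 (a m0).1
      unfold QuasiMetric.blt at hplt
      linarith
    set u : ℕ → X := fun n => (a n).1 with hu
    have hcauchy : IsCauchySeq Q.d u := by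
      intro ε hε
      obtain ⟨N, hN⟩ := hrsmall ε hε
      refine ⟨N, fun n m hn hnm => ?_⟩
      have h := hble2 n m hnm
      unfold QuasiMetric.ble at h
      have h2 : (0 : ℝ) ≤ ((a m).2 : ℝ) := (a m).2.coe_nonneg
      have h3 := hrad N n hn
      show Q.d (a n).1 (a m).1 < ε
      linarith
    obtain ⟨z, hz⟩ := hY u hcauchy
    have key : ∀ v : FB X, (∀ n, Q.ble (a n) v) → Q.d z v.1 = 0 := by
      intro v hv
      have hbdd : ∀ n : ℕ, ∀ t ∈ {t | ∃ m, n ≤ m ∧ t = Q.d (u m) v.1}, t ≤ ((a n).2 : ℝ) := by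
        rintro n t ⟨m, hnm, rfl⟩
        have h := hv m
        unfold QuasiMetric.ble at h
        have h2 : (0 : ℝ) ≤ (v.2 : ℝ) := v.2.coe_nonneg
        have h3 := hrad n m hnm
        show Q.d (a m).1 v.1 ≤ ((a n).2 : ℝ)
        linarith
      have hmem : ∀ n : ℕ, Q.d (u n) v.1 ∈ {t | ∃ m, n ≤ m ∧ t = Q.d (u m) v.1} :=
        fun n => ⟨n, le_refl n, rfl⟩
      have hb1 : ∀ n, supTail Q.d u v.1 n ≤ ((a n).2 : ℝ) := by
        intro n
        show sSup {t | ∃ m, n ≤ m ∧ t = Q.d (u m) v.1} ≤ ((a n).2 : ℝ)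
        exact csSup_le ⟨_, hmem n⟩ (hbdd n)
      have hb0 : ∀ n, (0 : ℝ) ≤ supTail Q.d u v.1 n := by
        intro n
        have := le_csSup ⟨((a n).2 : ℝ), hbdd n⟩ (hmem n)
        exact le_trans (Q.nonneg _ _) this
      have hinfle : ∀ n, Q.d z v.1 ≤ ((a n).2 : ℝ) := by
        intro n
        rw [hz v.1]
        refine le_trans (csInf_le ⟨0, ?_⟩ ⟨n, rfl⟩) (hb1 n)
        rintro t ⟨k, rfl⟩
        exact hb0 k
      by_contra hne
      have hpos : 0 < Q.d z v.1 := lt_of_le_of_ne (Q.nonneg _ _) (Ne.symm hne)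
      obtain ⟨n, hn⟩ := hrsmall _ hpos
      exact absurd (hinfle n) (not_le.2 hn)
    refine ⟨a, hamem, fun n => Q.blt_ble' (halt n), hableb, ?_⟩
    intro b' hb'
    have hzb : z = b.1 := hT1 _ _ (key b hableb)
    have hs0 : (b.2 : ℝ) = 0 := by
      by_contra hne
      have hpos : 0 < (b.2 : ℝ) := lt_of_le_of_ne b.2.coe_nonneg (Ne.symm hne)
      obtain ⟨n, hn⟩ := hrsmall _ hpos
      have h := hableb n
      unfold QuasiMetric.ble at h
      have h2 := Q.nonneg (a n).1 b.1
      linarith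
    have hs0' : (b'.2 : ℝ) = 0 := by
      by_contra hne
      have hpos : 0 < (b'.2 : ℝ) := lt_of_le_of_ne b'.2.coe_nonneg (Ne.symm hne)
      obtain ⟨n, hn⟩ := hrsmall _ hpos
      have h := hb' n
      unfold QuasiMetric.ble at h
      have h2 := Q.nonneg (a n).1 b'.1
      linarith
    have hd0 : Q.d b.1 b'.1 = 0 := by
      rw [← hzb]
      exact key b' hb'
    show Q.d b.1 b'.1 ≤ (b.2 : ℝ) - (b'.2 : ℝ)
    rw [hd0, hs0, hs0']
    norm_num
  · rintro ⟨a, hmem, -, hble, -⟩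
    exact Set.mem_iInter.2 fun n => ⟨a n, hmem n, hble n⟩
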